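/- Let n ≥ 1. For permutations β₁, β₂, β₃, β₄ of {1,…,2n}, the chain functional F(β) := |β₁| + 2|γ_{n,n}⁻¹β₂| + |β₃| + |γ_{n,n}⁻¹β₃| + |β₄| + |β₁⁻¹β₂| + |β₂⁻¹β₃| + |β₃⁻¹β₄| attains the value 3(2n − 2) (its minimum) if and only if Id ≤ β₁ ≤ β₂ ≤ γ_{n,n} and Id ≤ β₄ ≤ β₃ ≤ β₂ ≤ γ_{n,n}. -/

import Mathlib

/-!
For a permutation `σ` of a finite set of size `m`, `cycleCount σ` is the number of cycles
(fixed points count as cycles) and `permLen σ = m - cycleCount σ` (the minimal number of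
transpositions needed to write `σ`).  We model `{1,…,2n}` as `Fin n ⊕ Fin n`, the first
summand being `{1,…,n}` and the second `{n+1,…,2n}`.  `gammaNN n` is the product of the
two `n`-cycles `(1,2,…,n)` and `(n+1,…,2n)`.
-/

/-- The number of cycles of a permutation, where fixed points count as cycles. -/
noncomputable def cycleCount {α : Type*} [Fintype α] [DecidableEq α]
    (σ : Equiv.Perm α) : ℕ :=
  Multiset.card σ.cycleType + (Fintype.card α - σ.support.card)

/-- `|σ| = m - #(σ)`, the minimal number of transpositions whose product is `σ`. -/
noncomputable def permLen {α : Type*} [Fintype α] [DecidableEq α]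
    (σ : Equiv.Perm α) : ℕ :=
  Fintype.card α - cycleCount σ

/-- `γ_{n,n}`: the product of the two `n`-cycles `(1,…,n)` and `(n+1,…,2n)`. -/
def gammaNN (n : ℕ) : Equiv.Perm (Fin n ⊕ Fin n) :=
  Equiv.sumCongr (finRotate n) (finRotate n)

/-- A permutation of `{1,…,2n}` is connected if some cycle of it contains both an
element of `{1,…,n}` and an element of `{n+1,…,2n}`. -/
def IsConnectedPerm {n : ℕ} (β : Equiv.Perm (Fin n ⊕ Fin n)) : Prop :=
  ∃ a b : Fin n, β.SameCycle (Sum.inl a) (Sum.inr b)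

/-- The geodesic partial order on permutations: `σ ≤ τ` iff `|σ| + |σ⁻¹τ| = |τ|`. -/
def permLe {α : Type*} [Fintype α] [DecidableEq α] (σ τ : Equiv.Perm α) : Prop :=
  permLen σ + permLen (σ⁻¹ * τ) = permLen τ

/-- The chain functional
`F(β) = |β₁| + 2|γ_{n,n}⁻¹β₂| + |β₃| + |γ_{n,n}⁻¹β₃| + |β₄| + |β₁⁻¹β₂| + |β₂⁻¹β₃| + |β₃⁻¹β₄|`. -/
noncomputable def chainF {n : ℕ} (b₁ b₂ b₃ b₄ : Equiv.Perm (Fin n ⊕ Fin n)) : ℕ :=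
  permLen b₁ + 2 * permLen ((gammaNN n)⁻¹ * b₂) + permLen b₃
    + permLen ((gammaNN n)⁻¹ * b₃) + permLen b₄
    + permLen (b₁⁻¹ * b₂) + permLen (b₂⁻¹ * b₃) + permLen (b₃⁻¹ * b₄)


open Equiv Equiv.Perm

section Aux
variable {α : Type*} [Fintype α] [DecidableEq α]

lemma ct_card_le_supp (σ : Perm α) : Multiset.card σ.cycleType ≤ σ.support.card := by
  have h := Multiset.card_nsmul_le_sum (s := σ.cycleType) (a := 1)
    (fun x hx => le_trans (by norm_num) (two_le_of_mem_cycleType hx))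
  simpa [sum_cycleType] using h

lemma permLen_eq (σ : Perm α) : permLen σ = σ.support.card - Multiset.card σ.cycleType := by
  have h1 : σ.support.card ≤ Fintype.card α := Finset.card_le_univ _
  have h2 := ct_card_le_supp σ
  unfold permLen cycleCount
  omega

lemma permLen_one : permLen (1 : Perm α) = 0 := by
  simp [permLen_eq]

lemma permLen_inv (σ : Perm α) : permLen σ⁻¹ = permLen σ := by
  unfold permLen cycleCount
  rw [cycleType_inv, support_inv]

lemma peel (σ : Perm α) {x : α} (hx : σ x ≠ x) :
    permLen (Equiv.swap x (σ x) * σ) + 1 = permLen σ := by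
  have hc : (σ.cycleOf x).IsCycle := isCycle_cycleOf σ hx
  have hcx : (σ.cycleOf x) x = σ x := cycleOf_apply_self σ x
  have hmem : σ.cycleOf x ∈ σ.cycleFactorsFinset :=
    cycleOf_mem_cycleFactorsFinset_iff.mpr (mem_support.mpr hx)
  have hdisj : (σ * (σ.cycleOf x)⁻¹).Disjoint (σ.cycleOf x) :=
    disjoint_mul_inv_of_mem_cycleFactorsFinset hmem
  set c := σ.cycleOf x with hcdef
  set d := σ * c⁻¹ with hddef
  have hcd : c.Disjoint d := hdisj.symm
  have hdc : d * c = σ := inv_mul_cancel_right σ c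
  have hσ' : σ = c * d := by rw [hcd.commute.eq, hdc]
  have hct : σ.cycleType = c.cycleType + d.cycleType := by
    nth_rewrite 1 [hσ']; exact hcd.cycleType_mul
  have hsup : σ.support.card = c.support.card + d.support.card := by
    nth_rewrite 1 [hσ']; exact hcd.card_support_mul
  have hkd := ct_card_le_supp d
  have hsc2 : 2 ≤ c.support.card := hc.two_le_card_support
  have hcT : c.cycleType = {c.support.card} := hc.cycleType
  have hcxne : c x ≠ x := by rw [hcx]; exact hx
  by_cases h2 : c (c x) = x
  · have hcswap : c = Equiv.swap x (c x) := hc.eq_swap_of_apply_apply_eq_self hcxne h2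
    have heq : Equiv.swap x (σ x) * σ = d := by
      have hh : Equiv.swap x (σ x) = c := by rw [← hcx]; exact hcswap.symm
      have hcc : c * c = 1 := by rw [hcswap]; exact Equiv.swap_mul_self _ _
      rw [hh, hσ', ← mul_assoc, hcc, one_mul]
    have hsc : c.support.card = 2 := by
      rw [hcswap]; exact card_support_swap hcxne.symm
    have hctσ : Multiset.card σ.cycleType = 1 + Multiset.card d.cycleType := by
      rw [hct, hcT]; simp [add_comm]
    rw [heq, permLen_eq, permLen_eq]
    omega
  · have hc' : (Equiv.swap x (c x) * c).IsCycle := hc.swap_mul hcxne h2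
    have hsupp' : (Equiv.swap x (c x) * c).support = c.support \ {x} :=
      support_swap_mul_eq c x h2
    have hxc : x ∈ c.support := mem_support.mpr hcxne
    have hscc : (Equiv.swap x (c x) * c).support.card = c.support.card - 1 := by
      rw [hsupp', ← Finset.erase_eq, Finset.card_erase_of_mem hxc]
    have hdisj' : (Equiv.swap x (c x) * c).Disjoint d := by
      rw [disjoint_iff_disjoint_support] at hcd ⊢
      refine Finset.disjoint_of_subset_left ?_ hcd
      rw [hsupp']; exact Finset.sdiff_subset
    have heq : Equiv.swap x (σ x) * σ = (Equiv.swap x (c x) * c) * d := by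
      rw [← hcx, hσ', ← mul_assoc]
    have h2' : ((Equiv.swap x (c x) * c) * d).support.card
        = (Equiv.swap x (c x) * c).support.card + d.support.card :=
      hdisj'.card_support_mul
    have hctσ : Multiset.card σ.cycleType = 1 + Multiset.card d.cycleType := by
      rw [hct, hcT]; simp [add_comm]
    have hctcd : Multiset.card ((Equiv.swap x (c x) * c) * d).cycleType
        = 1 + Multiset.card d.cycleType := by
      rw [hdisj'.cycleType_mul, hc'.cycleType]; simp [add_comm]
    rw [heq, permLen_eq, permLen_eq]
    omega

lemma fixpeel {ρ : Perm α} {a c : α} (hρ : ρ a = a) (hac : a ≠ c) :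
    permLen (Equiv.swap a c * ρ) = permLen ρ + 1 := by
  have h : (Equiv.swap a c * ρ) a = c := by
    rw [mul_apply, hρ, Equiv.swap_apply_left]
  have hne : (Equiv.swap a c * ρ) a ≠ a := by rw [h]; exact hac.symm
  have hp := peel (Equiv.swap a c * ρ) hne
  rw [h, ← mul_assoc, Equiv.swap_mul_self, one_mul] at hp
  omega

lemma swap_mul_le_aux (k : ℕ) : ∀ (σ : Perm α) (a b : α), a ≠ b → permLen σ ≤ k →
    permLen (Equiv.swap a b * σ) ≤ permLen σ + 1 := by
  induction k with
  | zero =>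
    intro σ a b hab hk
    by_cases ha : σ a = a
    · exact le_of_eq (fixpeel ha hab)
    by_cases hb : σ b = b
    · rw [Equiv.swap_comm]; exact le_of_eq (fixpeel hb hab.symm)
    have := peel σ ha
    omega
  | succ k IH =>
    intro σ a b hab hk
    by_cases ha : σ a = a
    · exact le_of_eq (fixpeel ha hab)
    by_cases hb : σ b = b
    · rw [Equiv.swap_comm]; exact le_of_eq (fixpeel hb hab.symm)
    by_cases hab2 : σ a = b
    · have hp := peel σ ha
      rw [hab2] at hp
      omega
    · have hpeel := peel σ ha
      have hk' : permLen (Equiv.swap a (σ a) * σ) ≤ k := by omega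
      have h1 := IH (Equiv.swap a (σ a) * σ) (σ a) b (fun h => hab2 h) hk'
      have hρa : (Equiv.swap (σ a) b * (Equiv.swap a (σ a) * σ)) a = a := by
        rw [mul_apply, mul_apply, Equiv.swap_apply_right,
          Equiv.swap_apply_of_ne_of_ne (fun h => ha h.symm) hab]
      have h2 := fixpeel hρa (fun h => ha h.symm)
      have hfinal : Equiv.swap a (σ a) * (Equiv.swap (σ a) b * (Equiv.swap a (σ a) * σ))
          = Equiv.swap a b * σ := by
        rw [← mul_assoc, ← mul_assoc]
        congr 1
        have hsw := Equiv.swap_mul_swap_mul_swap (x := b) (y := σ a) (z := a)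
          (fun h => hab2 h.symm) hab.symm
        rw [Equiv.swap_comm (σ a) a, Equiv.swap_comm b (σ a)] at hsw
        exact hsw
      rw [← hfinal, h2]
      omega

lemma exists_swap_list (k : ℕ) : ∀ σ : Perm α, σ.support.card ≤ k →
    ∃ l : List (Perm α), (∀ t ∈ l, t.IsSwap) ∧ l.prod = σ ∧ l.length = permLen σ := by
  induction k with
  | zero =>
    intro σ hσ
    have h1 : σ = 1 := by
      rwa [Nat.le_zero, Finset.card_eq_zero, support_eq_empty_iff] at hσ
    exact ⟨[], by simp, by simp [h1], by simp [h1, permLen_one]⟩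
  | succ k IH =>
    intro σ hσ
    by_cases h1 : σ = 1
    · exact ⟨[], by simp, by simp [h1], by simp [h1, permLen_one]⟩
    · have hex : ∃ x, σ x ≠ x := by
        by_contra h; push_neg at h; exact h1 (Equiv.ext h)
      obtain ⟨x, hx⟩ := hex
      have hlt := card_support_swap_mul hx
      obtain ⟨l, hl1, hl2, hl3⟩ := IH (Equiv.swap x (σ x) * σ) (by omega)
      have hp := peel σ hx
      refine ⟨Equiv.swap x (σ x) :: l, ?_, ?_, ?_⟩
      · intro t ht
        rcases List.mem_cons.mp ht with rfl | ht
        · exact ⟨x, σ x, hx.symm, rfl⟩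
        · exact hl1 t ht
      · rw [List.prod_cons, hl2, ← mul_assoc, Equiv.swap_mul_self, one_mul]
      · simp only [List.length_cons, hl3]; omega

lemma permLen_prod_le (l : List (Perm α)) (h : ∀ t ∈ l, t.IsSwap) :
    permLen l.prod ≤ l.length := by
  induction l with
  | nil => simp [permLen_one]
  | cons t l ih =>
    obtain ⟨a, b, hab, rfl⟩ := h t (List.mem_cons_self (a := t) (l := l))
    have h1 := swap_mul_le_aux (permLen l.prod) l.prod a b hab le_rfl
    have h2 := ih (fun t ht => h t (List.mem_cons_of_mem _ ht))
    rw [List.prod_cons, List.length_cons]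
    omega

lemma permLen_mul_le (σ τ : Perm α) : permLen (σ * τ) ≤ permLen σ + permLen τ := by
  obtain ⟨l1, h11, h12, h13⟩ := exists_swap_list σ.support.card σ le_rfl
  obtain ⟨l2, h21, h22, h23⟩ := exists_swap_list τ.support.card τ le_rfl
  have := permLen_prod_le (l1 ++ l2) (by
    intro t ht
    rcases List.mem_append.mp ht with ht | ht
    · exact h11 t ht
    · exact h21 t ht)
  rwa [List.prod_append, h12, h22, List.length_append, h13, h23] at this

lemma permLen_tri (σ τ : Perm α) : permLen τ ≤ permLen σ + permLen (σ⁻¹ * τ) := by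
  have := permLen_mul_le σ (σ⁻¹ * τ)
  rwa [mul_inv_cancel_left] at this

end Aux

def leftE (n : ℕ) : Fin n ≃ {x : Fin n ⊕ Fin n // x.isLeft = true} where
  toFun a := ⟨Sum.inl a, rfl⟩
  invFun x := x.1.getLeft x.2
  left_inv a := rfl
  right_inv x := by
    rcases x with ⟨a | a, h⟩
    · rfl
    · simp at h

def rightE (n : ℕ) : Fin n ≃ {x : Fin n ⊕ Fin n // x.isRight = true} where
  toFun a := ⟨Sum.inr a, rfl⟩
  invFun x := x.1.getRight x.2
  left_inv a := rfl
  right_inv x := by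
    rcases x with ⟨a | a, h⟩
    · simp at h
    · rfl

lemma sumCongr_left_eq {n : ℕ} (σ : Equiv.Perm (Fin n)) :
    Equiv.sumCongr σ (Equiv.refl (Fin n)) = σ.extendDomain (leftE n) := by
  ext x
  cases x with
  | inl a =>
    have h := Equiv.Perm.extendDomain_apply_image (e := σ) (f := leftE n) (a := a)
    exact h.symm
  | inr b =>
    have h := Equiv.Perm.extendDomain_apply_not_subtype (e := σ) (f := leftE n)
      (b := Sum.inr b) (by simp)
    simp [h]

lemma sumCongr_right_eq {n : ℕ} (σ : Equiv.Perm (Fin n)) :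
    Equiv.sumCongr (Equiv.refl (Fin n)) σ = σ.extendDomain (rightE n) := by
  ext x
  cases x with
  | inl a =>
    have h := Equiv.Perm.extendDomain_apply_not_subtype (e := σ) (f := rightE n)
      (b := Sum.inl a) (by simp)
    simp [h]
  | inr b =>
    have h := Equiv.Perm.extendDomain_apply_image (e := σ) (f := rightE n) (a := b)
    exact h.symm

lemma permLen_gammaNN (n : ℕ) (hn : 1 ≤ n) : permLen (gammaNN n) = 2 * n - 2 := by
  rcases n with _ | n
  · omega
  rcases n with _ | m
  · have h1 : gammaNN 1 = 1 := by
      unfold gammaNN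
      rw [finRotate_one]
      ext x
      cases x <;> rfl
    rw [h1, permLen_one]
  · set r := finRotate (m + 2) with hr
    have hsplit : gammaNN (m + 2) =
        Equiv.sumCongr r (Equiv.refl (Fin (m+2))) * Equiv.sumCongr (Equiv.refl (Fin (m+2))) r := by
      unfold gammaNN
      ext x
      cases x <;> rfl
    have hdisj : Equiv.Perm.Disjoint (Equiv.sumCongr r (Equiv.refl (Fin (m+2))))
        (Equiv.sumCongr (Equiv.refl (Fin (m+2))) r) := by
      intro x
      cases x with
      | inl a => right; rfl
      | inr b => left; rfl
    have hct1 : Equiv.Perm.cycleType (Equiv.sumCongr r (Equiv.refl (Fin (m+2)))) = {m + 2} := by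
      rw [sumCongr_left_eq, Equiv.Perm.cycleType_extendDomain, hr, cycleType_finRotate]
    have hct2 : Equiv.Perm.cycleType (Equiv.sumCongr (Equiv.refl (Fin (m+2))) r) = {m + 2} := by
      rw [sumCongr_right_eq, Equiv.Perm.cycleType_extendDomain, hr, cycleType_finRotate]
    have hct : (gammaNN (m+2)).cycleType = {m + 2} + {m + 2} := by
      rw [hsplit, hdisj.cycleType_mul, hct1, hct2]
    have hsum := Equiv.Perm.sum_cycleType (gammaNN (m+2))
    rw [hct] at hsum
    have hsupp : (gammaNN (m+2)).support.card = 2 * m + 4 := by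
      simp at hsum
      omega
    have hcard : Multiset.card ((gammaNN (m+2)).cycleType) = 2 := by rw [hct]; rfl
    rw [permLen_eq, hsupp, hcard]
    omega


/-- The chain functional attains its minimum `3(2n-2)` exactly on the configurations
`Id ≤ β₁ ≤ β₂ ≤ γ_{n,n}` and `Id ≤ β₄ ≤ β₃ ≤ β₂ ≤ γ_{n,n}`. -/
theorem chainF_eq_min_iff (n : ℕ) (hn : 1 ≤ n)
    (b₁ b₂ b₃ b₄ : Equiv.Perm (Fin n ⊕ Fin n)) :
    chainF b₁ b₂ b₃ b₄ = 3 * (2 * n - 2) ↔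
      (permLe 1 b₁ ∧ permLe b₁ b₂ ∧ permLe b₂ (gammaNN n)) ∧
        (permLe 1 b₄ ∧ permLe b₄ b₃ ∧ permLe b₃ b₂ ∧ permLe b₂ (gammaNN n)) := by
  have hγ := permLen_gammaNN n hn
  have t1 := permLen_tri b₁ b₂
  have t2 := permLen_tri b₂ (gammaNN n)
  have t3 := permLen_tri b₄ b₃
  have t4 := permLen_tri b₃ b₂
  have t5 := permLen_tri b₃ (gammaNN n)
  have t6 := permLen_mul_le (b₃⁻¹ * b₂) (b₂⁻¹ * gammaNN n)
  have e6 : (b₃⁻¹ * b₂) * (b₂⁻¹ * gammaNN n) = b₃⁻¹ * gammaNN n := by group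
  rw [e6] at t6
  have i1 : permLen ((gammaNN n)⁻¹ * b₂) = permLen (b₂⁻¹ * gammaNN n) := by
    rw [show (gammaNN n)⁻¹ * b₂ = (b₂⁻¹ * gammaNN n)⁻¹ by group, permLen_inv]
  have i2 : permLen ((gammaNN n)⁻¹ * b₃) = permLen (b₃⁻¹ * gammaNN n) := by
    rw [show (gammaNN n)⁻¹ * b₃ = (b₃⁻¹ * gammaNN n)⁻¹ by group, permLen_inv]
  have i3 : permLen (b₂⁻¹ * b₃) = permLen (b₃⁻¹ * b₂) := by
    rw [show b₂⁻¹ * b₃ = (b₃⁻¹ * b₂)⁻¹ by group, permLen_inv]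
  have i4 : permLen (b₃⁻¹ * b₄) = permLen (b₄⁻¹ * b₃) := by
    rw [show b₃⁻¹ * b₄ = (b₄⁻¹ * b₃)⁻¹ by group, permLen_inv]
  simp only [chainF, permLe, inv_one, one_mul, permLen_one, i1, i2, i3, i4]
  constructor
  · intro h
    refine ⟨⟨by omega, by omega, by omega⟩, by omega, by omega, by omega, by omega⟩
  · rintro ⟨⟨-, h2, h3⟩, -, h4, h5, -⟩
    omega
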